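/- For every permutation π in S_n, applying West's stack-sorting map s at most n-1 times yields the identity permutation: s^{n-1}(π) = id. -/

import Mathlib

/-- West's stack-sorting map, implemented with an explicit stack (top = head). -/
def sWestAux : List ℕ → List ℕ → List ℕ
  | [], st => st
  | x :: xs, [] => sWestAux xs [x]
  | x :: xs, t :: st =>
      if t < x then t :: sWestAux (x :: xs) st
      else sWestAux xs (x :: t :: st)
termination_by l st => 2 * l.length + st.length

def sWest (l : List ℕ) : List ℕ := sWestAux l []

/-- A word contains a subsequence equivalent to `aba`. -/
def HasABA (l : List ℕ) : Prop :=
  ∃ i j k : Fin l.length, i < j ∧ j < k ∧ l.get i = l.get k ∧ l.get j ≠ l.get i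

instance (l : List ℕ) : Decidable (HasABA l) := by
  unfold HasABA; infer_instance

/-- Xia's stack-sorting map φ_{aba}, with explicit stack (top = head). -/
def phiAux : List ℕ → List ℕ → List ℕ
  | [], st => st
  | x :: xs, [] => phiAux xs [x]
  | x :: xs, t :: st =>
      if HasABA (x :: t :: st) then t :: phiAux (x :: xs) st
      else phiAux xs (x :: t :: st)
termination_by l st => 2 * l.length + st.length

def phi (p : List ℕ) : List ℕ := phiAux p []

/-- A set partition word is sorted: all occurrences of each letter are consecutive. -/
def SortedWord (p : List ℕ) : Prop :=
  ∀ i j k : Fin p.length, i < j → j < k → p.get i = p.get k → p.get j = p.get i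

/-- Number of distinct letters. -/
def Nletters (p : List ℕ) : ℕ := p.toFinset.card

def Avoids231 (l : List ℕ) : Prop :=
  ¬ ∃ i j k : Fin l.length, i < j ∧ j < k ∧ l.get k < l.get i ∧ l.get i < l.get j


/-- West's stack-sorting map sorts any permutation of length n in at most n-1 passes. -/
theorem sWestAux_perm (l st : List ℕ) : (sWestAux l st).Perm (st ++ l) := by
  induction l, st using sWestAux.induct with
  | case1 st => simp [sWestAux]
  | case2 x xs ih => simpa [sWestAux] using ih
  | case3 x xs t st h ih =>
      rw [sWestAux, if_pos h]
      exact (ih.cons t).trans (by simp)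
  | case4 x xs t st h ih =>
      rw [sWestAux, if_neg h]
      exact ih.trans (by simpa using (List.perm_middle (a := x) (l₁ := t :: st) (l₂ := xs)).symm)

theorem sWestAux_bound (l st : List ℕ) (m : ℕ) (hl : ∀ x ∈ l, x < m) (hst : ∀ x ∈ st, x < m) :
    sWestAux l (st ++ [m]) = sWestAux l st ++ [m] := by
  induction l, st using sWestAux.induct with
  | case1 st => simp [sWestAux]
  | case2 x xs ih =>
      have hx : x < m := hl x (by simp)
      rw [show ([] : List ℕ) ++ [m] = [m] from rfl]
      rw [sWestAux, sWestAux, if_neg (by omega)]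
      rw [show (x :: [m] : List ℕ) = [x] ++ [m] from rfl]
      exact ih (fun y hy => hl y (by simp [hy])) (by simp [hx])
  | case3 x xs t st h ih =>
      rw [List.cons_append, sWestAux, if_pos h, sWestAux, if_pos h, List.cons_append]
      rw [ih hl (fun y hy => hst y (by simp [hy]))]
  | case4 x xs t st h ih =>
      rw [List.cons_append, sWestAux, if_neg h, sWestAux, if_neg h]
      refine ih (fun y hy => hl y (by simp [hy])) ?_
      intro y hy
      simp only [List.mem_cons] at hy
      rcases hy with rfl | rfl | h2
      · exact hl y (by simp)
      · exact hst y (by simp)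
      · exact hst y (by simp [h2])

theorem sWestAux_flush (R st : List ℕ) (m : ℕ) (hst : ∀ x ∈ st, x < m) :
    sWestAux (m :: R) st = st ++ sWestAux R [m] := by
  induction st with
  | nil => rw [sWestAux]; rfl
  | cons t st ih =>
      rw [sWestAux, if_pos (hst t (by simp))]
      rw [ih (fun y hy => hst y (by simp [hy]))]
      rfl

theorem sWestAux_split (L R st : List ℕ) (m : ℕ) (hL : ∀ x ∈ L, x < m)
    (hst : ∀ x ∈ st, x < m) :
    sWestAux (L ++ m :: R) st = sWestAux L st ++ sWestAux R [m] := by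
  induction L, st using sWestAux.induct with
  | case1 st => rw [List.nil_append, sWestAux_flush R st m hst, sWestAux]
  | case2 x xs ih =>
      rw [List.cons_append, sWestAux, sWestAux]
      exact ih (fun y hy => hL y (by simp [hy])) (by simp [hL x (by simp)])
  | case3 x xs t st h ih =>
      rw [List.cons_append, sWestAux, if_pos h, sWestAux, if_pos h, List.cons_append]
      exact congrArg (t :: ·) (ih hL (fun y hy => hst y (by simp [hy])))
  | case4 x xs t st h ih =>
      rw [List.cons_append, sWestAux, if_neg h, sWestAux, if_neg h]
      refine ih (fun y hy => hL y (by simp [hy])) ?_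
      intro y hy
      simp only [List.mem_cons] at hy
      rcases hy with rfl | rfl | h2
      · exact hL y (by simp)
      · exact hst y (by simp)
      · exact hst y (by simp [h2])

theorem sWest_perm (l : List ℕ) : (sWest l).Perm l := by
  simpa [sWest] using sWestAux_perm l []

theorem sWest_split (L R : List ℕ) (m : ℕ) (hL : ∀ x ∈ L, x < m) (hR : ∀ x ∈ R, x < m) :
    sWest (L ++ m :: R) = sWest L ++ sWest R ++ [m] := by
  unfold sWest
  rw [sWestAux_split L R [] m hL (by simp)]
  rw [show ([m] : List ℕ) = [] ++ [m] from rfl, sWestAux_bound R [] m hR (by simp)]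
  rw [List.append_assoc]
  simp

theorem sWest_append_max (w : List ℕ) (m : ℕ) (hw : ∀ x ∈ w, x < m) :
    sWest (w ++ [m]) = sWest w ++ [m] := by
  simpa [sWest, sWestAux] using sWest_split w [] m hw (by simp)


theorem stmt0 (n : ℕ) (l : List ℕ) (h : l.Perm (List.range n)) :
    sWest^[n - 1] l = List.range n := by
  induction n generalizing l with
  | zero => simpa using h
  | succ n ih =>
    rcases n with _ | k
    · have h0 : l.Perm [0] := by simpa [List.range_succ] using h
      have : l = [0] := List.Perm.eq_singleton h0
      simp [this, List.range_succ]
    ·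
      -- n = k + 1, length n+1 = k+2
      have hmem : (k + 1) ∈ l := h.mem_iff.mpr (by simp [List.mem_range])
      obtain ⟨L, R, rfl⟩ := List.append_of_mem hmem
      have hcount : (L ++ (k+1) :: R).count (k+1) = 1 := by
        rw [h.count_eq]
        exact List.count_eq_one_of_mem List.nodup_range (by simp)
      have hcL : L.count (k+1) = 0 ∧ R.count (k+1) = 0 := by
        simp [List.count_append] at hcount; omega
      have hlt : ∀ x ∈ L ++ (k+1) :: R, x < k + 2 := by
        intro x hx
        have := h.subset hx
        have := List.mem_range.mp this; omega
      have hL : ∀ x ∈ L, x < k + 1 := by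
        intro x hx
        have h1 : x < k + 2 := hlt x (by simp [hx])
        have h2 : x ≠ k + 1 := by
          intro rfl'; subst rfl'
          have := List.count_pos_iff.mpr hx
          omega
        omega
      have hR : ∀ x ∈ R, x < k + 1 := by
        intro x hx
        have h1 : x < k + 2 := hlt x (by simp [hx])
        have h2 : x ≠ k + 1 := by
          intro rfl'; subst rfl'
          have := List.count_pos_iff.mpr hx
          omega
        omega
      have hsplit : sWest (L ++ (k+1) :: R) = (sWest L ++ sWest R) ++ [k+1] :=
        sWest_split L R (k+1) hL hR
      set w := sWest L ++ sWest R with hw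
      have hwperm : w.Perm (List.range (k+1)) := by
        have h1 : (sWest (L ++ (k+1) :: R)).Perm (List.range (k+2)) :=
          (sWest_perm _).trans h
        rw [hsplit, List.range_succ] at h1
        exact (List.perm_append_right_iff [k+1]).mp h1
      -- iterate lemma
      have hiter : ∀ (j : ℕ) (v : List ℕ), v.Perm (List.range (k+1)) →
          sWest^[j] (v ++ [k+1]) = sWest^[j] v ++ [k+1] := by
        intro j
        induction j with
        | zero => intro v _; simp
        | succ j ihj =>
            intro v hv
            rw [Function.iterate_succ_apply, Function.iterate_succ_apply]
            rw [sWest_append_max v (k+1) (fun x hx => by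
              have := hv.subset hx; simpa [List.mem_range] using this)]
            exact ihj (sWest v) ((sWest_perm v).trans hv)
      show sWest^[k + 1] (L ++ (k+1) :: R) = List.range (k + 2)
      rw [Function.iterate_succ_apply, hsplit, hiter k w hwperm]
      have ih' := ih w hwperm
      rw [Nat.add_sub_cancel] at ih'
      rw [ih', ← List.range_succ]
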